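/- Let (X,τ) be a compact Hausdorff space and d a semi metric on X with τ_d weaker than τ. Let ρ be the semi metric on S(C(X,ℂ)) given by ρ(μ,ν) = sup{ |μ(a) − ν(a)| : a ∈ C(X,ℂ), |a(p) − a(q)| ≤ d(p,q) for all p,q ∈ X }. Then the topology induced by ρ on S(C(X,ℂ)) is weaker than the weak* topology: for every state ν and every ε > 0 there is a weak* open set U containing ν such that every state ν' ∈ U satisfies ρ(ν',ν) < ε. -/

import Mathlib

open scoped ENNReal

noncomputable section

variable {X : Type*} [TopologicalSpace X]

/-- A state on the C*-algebra `C(X, ℂ)`, viewed as an element of the weak* dual: a continuous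
linear functional sending the unit to `1` and taking nonnegative real values on positive
elements `star a * a`. -/
def IsState (φ : WeakDual ℂ C(X, ℂ)) : Prop :=
  φ 1 = 1 ∧ ∀ a : C(X, ℂ), 0 ≤ (φ (star a * a)).re ∧ (φ (star a * a)).im = 0

/-- The Monge–Kantorovich semi metric `ρ` on functionals on `C(X, ℂ)` associated with a semi
metric `d` on `X`: `ρ(μ, ν) = sup { |μ a - ν a| : a ∈ C(X, ℂ), |a p - a q| ≤ d p q ∀ p q }`,
with values in `[0, ∞]`. -/
def rho (d : X → X → ℝ) (μ ν : WeakDual ℂ C(X, ℂ)) : ℝ≥0∞ :=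
  ⨆ a ∈ {a : C(X, ℂ) | ∀ p q : X, ‖a p - a q‖ ≤ d p q}, (‖μ a - ν a‖₊ : ℝ≥0∞)

def ofRealCM (f : C(X, ℝ)) : C(X, ℂ) :=
  ⟨fun x => (f x : ℂ), Complex.continuous_ofReal.comp f.continuous⟩

lemma isState_nonneg' {φ : WeakDual ℂ C(X, ℂ)} (hφ : IsState φ)
    (g : C(X, ℂ)) (hg : ∀ x, 0 ≤ (g x).re ∧ (g x).im = 0) :
    0 ≤ (φ g).re ∧ (φ g).im = 0 := by
  have hc : Continuous fun x => ((Real.sqrt ((g x).re) : ℝ) : ℂ) :=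
    Complex.continuous_ofReal.comp
      (Real.continuous_sqrt.comp (Complex.continuous_re.comp g.continuous))
  set a : C(X, ℂ) := ⟨_, hc⟩ with ha
  have key : star a * a = g := by
    ext x
    simp only [ContinuousMap.mul_apply, ContinuousMap.star_apply, ha, ContinuousMap.coe_mk]
    rw [Complex.star_def, Complex.conj_ofReal, ← Complex.ofReal_mul,
      Real.mul_self_sqrt (hg x).1]
    exact Complex.ext rfl (hg x).2.symm
  rw [← key]
  exact hφ.2 a

lemma isState_real' [CompactSpace X] {φ : WeakDual ℂ C(X, ℂ)} (hφ : IsState φ) (f : C(X, ℂ))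
    (hf : ∀ x, (f x).im = 0) : ‖φ f‖ ≤ ‖f‖ := by
  have hb : ∀ x, |(f x).re| ≤ ‖f‖ := fun x => by
    calc |(f x).re| ≤ ‖f x‖ := Complex.abs_re_le_norm _
      _ = ‖f x‖ := rfl
      _ ≤ ‖f‖ := f.norm_coe_le_norm x
  have h1 : φ ((‖f‖ : ℂ) • 1 - f) = (‖f‖ : ℂ) - φ f := by
    rw [map_sub, map_smul, hφ.1, smul_eq_mul, mul_one]
  have h2 : φ ((‖f‖ : ℂ) • 1 + f) = (‖f‖ : ℂ) + φ f := by
    rw [map_add, map_smul, hφ.1, smul_eq_mul, mul_one]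
  have p1 := isState_nonneg' hφ ((‖f‖ : ℂ) • 1 - f) (fun x => by
    simp only [ContinuousMap.sub_apply, ContinuousMap.smul_apply, ContinuousMap.one_apply,
      smul_eq_mul, mul_one, Complex.sub_re, Complex.ofReal_re, Complex.sub_im,
      Complex.ofReal_im]
    constructor
    · have := abs_le.1 (hb x); linarith [this.2]
    · rw [hf x]; ring)
  have p2 := isState_nonneg' hφ ((‖f‖ : ℂ) • 1 + f) (fun x => by
    simp only [ContinuousMap.add_apply, ContinuousMap.smul_apply, ContinuousMap.one_apply,
      smul_eq_mul, mul_one, Complex.add_re, Complex.ofReal_re, Complex.add_im,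
      Complex.ofReal_im]
    constructor
    · have := abs_le.1 (hb x); linarith [this.1]
    · rw [hf x]; ring)
  rw [h1] at p1; rw [h2] at p2
  simp only [Complex.sub_re, Complex.sub_im, Complex.add_re, Complex.add_im,
    Complex.ofReal_re, Complex.ofReal_im] at p1 p2
  have him : (φ f).im = 0 := by linarith [p1.2, p2.2]
  have : φ f = ((φ f).re : ℂ) := Complex.ext rfl (by simp [him])
  rw [this, Complex.norm_real, Real.norm_eq_abs]
  exact abs_le.2 ⟨by linarith [p2.1], by linarith [p1.1]⟩

lemma isState_bound' [CompactSpace X] {φ : WeakDual ℂ C(X, ℂ)} (hφ : IsState φ)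
    (b : C(X, ℂ)) : ‖φ b‖ ≤ 2 * ‖b‖ := by
  have hcf : Continuous fun x => (((b x).re : ℝ) : ℂ) :=
    Complex.continuous_ofReal.comp (Complex.continuous_re.comp b.continuous)
  have hcg : Continuous fun x => (((b x).im : ℝ) : ℂ) :=
    Complex.continuous_ofReal.comp (Complex.continuous_im.comp b.continuous)
  set f : C(X, ℂ) := ⟨_, hcf⟩ with hfdef
  set g : C(X, ℂ) := ⟨_, hcg⟩ with hgdef
  have hbfg : b = f + Complex.I • g := by
    ext x
    simp only [ContinuousMap.add_apply, ContinuousMap.smul_apply, hfdef, hgdef,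
      ContinuousMap.coe_mk, smul_eq_mul]
    rw [mul_comm]
    exact (Complex.re_add_im (b x)).symm
  have hfn : ‖f‖ ≤ ‖b‖ := by
    refine (ContinuousMap.norm_le _ (norm_nonneg b)).2 fun x => ?_
    simp only [hfdef, ContinuousMap.coe_mk, Complex.norm_real, Real.norm_eq_abs]
    exact le_trans (Complex.abs_re_le_norm _) (b.norm_coe_le_norm x)
  have hgn : ‖g‖ ≤ ‖b‖ := by
    refine (ContinuousMap.norm_le _ (norm_nonneg b)).2 fun x => ?_
    simp only [hgdef, ContinuousMap.coe_mk, Complex.norm_real, Real.norm_eq_abs]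
    exact le_trans (Complex.abs_im_le_norm _) (b.norm_coe_le_norm x)
  have h1 : ‖φ f‖ ≤ ‖f‖ := isState_real' hφ f (fun x => by simp [hfdef])
  have h2 : ‖φ g‖ ≤ ‖g‖ := isState_real' hφ g (fun x => by simp [hgdef])
  calc ‖φ b‖ = ‖φ f + Complex.I * φ g‖ := by
        rw [hbfg, map_add, map_smul, smul_eq_mul]
    _ ≤ ‖φ f‖ + ‖Complex.I * φ g‖ := norm_add_le _ _
    _ = ‖φ f‖ + ‖φ g‖ := by rw [norm_mul, Complex.norm_I, one_mul]
    _ ≤ ‖b‖ + ‖b‖ := add_le_add (le_trans h1 hfn) (le_trans h2 hgn)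
    _ = 2 * ‖b‖ := by ring

set_option maxHeartbeats 1000000 in
/-- Let `(X, τ)` be compact Hausdorff and `d` a semi metric on `X` whose
induced topology is weaker than `τ`, and let `ρ` be the induced Monge–Kantorovich semi metric
on the state space of `C(X, ℂ)`.  Then the topology induced by `ρ` on the state space is
weaker than the weak* topology: for every state `ν` and `ε > 0` there is a weak* open set `U`
containing `ν` such that every state `ν' ∈ U` satisfies `ρ(ν', ν) < ε`. -/
theorem rho_topology_weaker_than_weakstar [CompactSpace X] [T2Space X] (d : X → X → ℝ)
    (d_nonneg : ∀ x y, 0 ≤ d x y)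
    (d_refl : ∀ x, d x x = 0)
    (d_symm : ∀ x y, d x y = d y x)
    (d_triangle : ∀ x y z, d x z ≤ d x y + d y z)
    (hweaker : ∀ (x : X) (ε : ℝ), 0 < ε →
      ∃ U : Set X, IsOpen U ∧ x ∈ U ∧ ∀ y ∈ U, d x y < ε) :
    ∀ ν : WeakDual ℂ C(X, ℂ), IsState ν → ∀ ε : ℝ, 0 < ε →
      ∃ U : Set (WeakDual ℂ C(X, ℂ)), IsOpen U ∧ ν ∈ U ∧
        ∀ ν' ∈ U, IsState ν' → rho d ν' ν < ENNReal.ofReal ε := by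
  intro ν hν ε hε
  rcases isEmpty_or_nonempty X with hX | hX
  · exfalso
    have h1 : (1 : C(X, ℂ)) = 0 := by ext x; exact isEmptyElim x
    have h2 := hν.1
    rw [h1, map_zero] at h2
    exact one_ne_zero h2.symm
  obtain ⟨x₁⟩ := id hX
  -- `d x₁ ·` is continuous
  have hdcont : Continuous fun x => d x₁ x := by
    rw [continuous_iff_continuousAt]
    intro x
    rw [ContinuousAt, Metric.tendsto_nhds]
    intro δ hδ
    obtain ⟨U, hUo, hxU, hU⟩ := hweaker x δ hδ
    filter_upwards [hUo.mem_nhds hxU] with y hy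
    have h1 : d x₁ y ≤ d x₁ x + d x y := d_triangle x₁ x y
    have h2 : d x₁ x ≤ d x₁ y + d x y := by
      have h3 := d_triangle x₁ y x
      rw [d_symm y x] at h3; linarith
    have h3 := hU y hy
    rw [Real.dist_eq, abs_lt]
    constructor <;> linarith
  obtain ⟨xm, -, hxm⟩ := isCompact_univ.exists_isMaxOn Set.univ_nonempty
    hdcont.continuousOn
  set M := d x₁ xm with hM
  have hM0 : 0 ≤ M := d_nonneg _ _
  have hMb : ∀ x, d x₁ x ≤ M := fun x => hxm (Set.mem_univ x)
  have hδ : (0 : ℝ) < ε / 8 := by linarith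
  choose V hVo hVx hVd using fun x : X => hweaker x (ε / 8) hδ
  obtain ⟨s, hs⟩ := isCompact_univ.elim_finite_subcover V hVo
    (fun x _ => Set.mem_iUnion.2 ⟨x, hVx x⟩)
  obtain ⟨po, hpo⟩ := PartitionOfUnity.exists_isSubordinate (s := (Set.univ : Set X))
    isClosed_univ (fun i : s => V i) (fun i => hVo i)
    (by
      intro x _
      have hx := hs (Set.mem_univ x)
      simp only [Set.mem_iUnion] at hx ⊢
      obtain ⟨i, hi, hxi⟩ := hx
      exact ⟨⟨i, hi⟩, hxi⟩)
  set c : s → C(X, ℂ) := fun i => ofRealCM (po i) with hc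
  set n : ℕ := s.card with hn
  set η : ℝ := ε / (8 * (M + 1) * (n + 1)) with hηdef
  have hη0 : 0 < η := by positivity
  set U : Set (WeakDual ℂ C(X, ℂ)) :=
    {ν' | ∀ i : s, ‖ν' (c i) - ν (c i)‖ < η} with hUdef
  have hUopen : IsOpen U := by
    have hrw : U = ⋂ i : s,
        (fun ν' : WeakDual ℂ C(X, ℂ) => ν' (c i)) ⁻¹' Metric.ball (ν (c i)) η := by
      ext ν'
      simp [hUdef, Metric.mem_ball, dist_eq_norm]
    rw [hrw]
    exact isOpen_iInter_of_finite fun i =>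
      Metric.isOpen_ball.preimage (WeakDual.eval_continuous (c i))
  refine ⟨U, hUopen, by simp [hUdef, hη0], ?_⟩
  intro ν' hν'U hν'
  have hsum1 : ∀ x, ∑ i : s, po i x = 1 := fun x => by
    rw [← finsum_eq_sum_of_fintype]
    exact po.sum_eq_one (Set.mem_univ x)
  have key : ∀ a ∈ {a : C(X, ℂ) | ∀ p q : X, ‖a p - a q‖ ≤ d p q},
      (‖ν' a - ν a‖₊ : ℝ≥0∞) ≤ ENNReal.ofReal (3 * ε / 4) := by
    intro a ha
    rw [← ENNReal.ofReal_coe_nnreal, coe_nnnorm]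
    apply ENNReal.ofReal_le_ofReal
    set b : C(X, ℂ) := a - a x₁ • 1 with hb
    have hbx : ∀ x, b x = a x - a x₁ := fun x => by simp [hb]
    have hbdiff : ∀ p q : X, b p - b q = a p - a q := fun p q => by
      rw [hbx, hbx]; ring
    have hbM : ∀ x, ‖b x‖ ≤ M := fun x => by
      rw [hbx]
      calc ‖a x - a x₁‖ ≤ d x x₁ := ha x x₁
        _ = d x₁ x := d_symm x x₁
        _ ≤ M := hMb x
    set t : C(X, ℂ) := ∑ i : s, b (i : X) • c i with ht
    have happrox : ‖b - t‖ ≤ ε / 8 := by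
      refine (ContinuousMap.norm_le _ hδ.le).2 fun x => ?_
      have e1 : (b - t) x = ∑ i : s, ((po i x : ℝ) : ℂ) * (b x - b (i : X)) := by
        have hone : (∑ i : s, ((po i x : ℝ) : ℂ)) = 1 := by
          rw [← Complex.ofReal_sum, hsum1 x, Complex.ofReal_one]
        have e3 : ∑ i : s, ((po i x : ℝ) : ℂ) * (b x - b (i : X))
            = b x - ∑ i : s, b (i : X) * ((po i x : ℝ) : ℂ) := by
          calc ∑ i : s, ((po i x : ℝ) : ℂ) * (b x - b (i : X))
              = ∑ i : s, (((po i x : ℝ) : ℂ) * b x - b (i : X) * ((po i x : ℝ) : ℂ)) :=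
                Finset.sum_congr rfl fun i _ => by ring
            _ = (∑ i : s, ((po i x : ℝ) : ℂ) * b x)
                - ∑ i : s, b (i : X) * ((po i x : ℝ) : ℂ) := Finset.sum_sub_distrib _ _
            _ = b x - ∑ i : s, b (i : X) * ((po i x : ℝ) : ℂ) := by
                rw [← Finset.sum_mul, hone, one_mul]
        rw [e3]
        simp only [ContinuousMap.sub_apply, ht, ContinuousMap.sum_apply,
          ContinuousMap.smul_apply, smul_eq_mul, hc, ofRealCM, ContinuousMap.coe_mk]
      rw [e1]
      calc ‖∑ i : s, ((po i x : ℝ) : ℂ) * (b x - b (i : X))‖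
          ≤ ∑ i : s, ‖((po i x : ℝ) : ℂ) * (b x - b (i : X))‖ := norm_sum_le _ _
        _ ≤ ∑ i : s, po i x * (ε / 8) := by
            refine Finset.sum_le_sum fun i _ => ?_
            rw [norm_mul, Complex.norm_real, Real.norm_eq_abs,
              abs_of_nonneg (po.nonneg i x)]
            rcases eq_or_ne (po i x) 0 with h0 | h0
            · simp [h0]
            · have hxV : x ∈ V (i : X) :=
                hpo i (subset_tsupport _ (Function.mem_support.2 h0))
              have hd : d (i : X) x < ε / 8 := hVd (i : X) x hxV
              have hbb : ‖b x - b (i : X)‖ ≤ d (i : X) x := by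
                rw [hbdiff]
                calc ‖a x - a (i : X)‖ ≤ d x (i : X) := ha x (i : X)
                  _ = d (i : X) x := d_symm _ _
              exact mul_le_mul_of_nonneg_left (le_trans hbb hd.le) (po.nonneg i x)
        _ = (∑ i : s, po i x) * (ε / 8) := (Finset.sum_mul _ _ _).symm
        _ = ε / 8 := by rw [hsum1 x, one_mul]
    have hb1 : ν' b = ν' a - a x₁ := by
      rw [hb, map_sub, map_smul, hν'.1, smul_eq_mul, mul_one]
    have hb2 : ν b = ν a - a x₁ := by
      rw [hb, map_sub, map_smul, hν.1, smul_eq_mul, mul_one]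
    have hdiff : ν' a - ν a = ν' b - ν b := by rw [hb1, hb2]; ring
    have htt : ν' t - ν t = ∑ i : s, b (i : X) * (ν' (c i) - ν (c i)) := by
      rw [ht, map_sum, map_sum, ← Finset.sum_sub_distrib]
      exact Finset.sum_congr rfl fun i _ => by
        rw [map_smul, map_smul, smul_eq_mul, smul_eq_mul]; ring
    have hbd1 : ‖ν' (b - t)‖ ≤ 2 * (ε / 8) := by
      calc ‖ν' (b - t)‖ ≤ 2 * ‖b - t‖ := isState_bound' hν' _
        _ ≤ 2 * (ε / 8) := by linarith
    have hbd2 : ‖ν (b - t)‖ ≤ 2 * (ε / 8) := by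
      calc ‖ν (b - t)‖ ≤ 2 * ‖b - t‖ := isState_bound' hν _
        _ ≤ 2 * (ε / 8) := by linarith
    have hsumb : ‖ν' t - ν t‖ ≤ (n : ℝ) * (M * η) := by
      rw [htt]
      calc ‖∑ i : s, b (i : X) * (ν' (c i) - ν (c i))‖
          ≤ ∑ i : s, ‖b (i : X) * (ν' (c i) - ν (c i))‖ := norm_sum_le _ _
        _ ≤ ∑ _i : s, M * η := by
            refine Finset.sum_le_sum fun i _ => ?_
            rw [norm_mul]
            exact mul_le_mul (hbM _) (hν'U i).le (norm_nonneg _) hM0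
        _ = (n : ℝ) * (M * η) := by
            rw [Finset.sum_const, nsmul_eq_mul, Finset.card_univ, Fintype.card_coe]
    have hnMη : (n : ℝ) * (M * η) ≤ ε / 8 := by
      have hD : (0 : ℝ) < 8 * (M + 1) * ((n : ℝ) + 1) := by positivity
      have hrw : (n : ℝ) * (M * η) = ((n : ℝ) * M * ε) / (8 * (M + 1) * ((n : ℝ) + 1)) := by
        rw [hηdef]; push_cast; ring
      rw [hrw, div_le_div_iff₀ hD (by norm_num : (0 : ℝ) < 8)]
      have hnn : (0 : ℝ) ≤ (n : ℝ) := Nat.cast_nonneg n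
      nlinarith [mul_nonneg hnn hM0, mul_nonneg hε.le hM0, mul_nonneg hε.le hnn,
        mul_nonneg (mul_nonneg hε.le hnn) hM0]
    have hsplit : ν' b - ν b = (ν' (b - t) - ν (b - t)) + (ν' t - ν t) := by
      rw [show ν' (b - t) = ν' b - ν' t from map_sub ν' b t,
        show ν (b - t) = ν b - ν t from map_sub ν b t]
      ring
    calc ‖ν' a - ν a‖ = ‖(ν' (b - t) - ν (b - t)) + (ν' t - ν t)‖ := by
          rw [hdiff, hsplit]
      _ ≤ ‖ν' (b - t) - ν (b - t)‖ + ‖ν' t - ν t‖ := norm_add_le _ _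
      _ ≤ (‖ν' (b - t)‖ + ‖ν (b - t)‖) + ‖ν' t - ν t‖ := by
          gcongr; exact norm_sub_le _ _
      _ ≤ (2 * (ε / 8) + 2 * (ε / 8)) + ε / 8 :=
          add_le_add (add_le_add hbd1 hbd2) (le_trans hsumb hnMη)
      _ ≤ 3 * ε / 4 := by linarith
  exact lt_of_le_of_lt (iSup₂_le key)
    ((ENNReal.ofReal_lt_ofReal_iff hε).2 (by linarith))


end
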